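/- Fix $i \in I$ and suppose $r_i$ is a field automorphism of $\mathcal{Y}_m$ fixing $\mathbb{C}$ pointwise such that $r_i(y_i(n)) = \frac{P_i(n-2)}{P_i(n-1)}\, y_i(n)\, X_i(n-1)$ for all $n \in \mathbb{Z}/m\mathbb{Z}$ and $r_i(y_j(n)) = y_j(n)$ for all $j \neq i$ and all $n$. Then the fixed field $\{f \in \mathcal{Y}_m : r_i(f) = f\}$ equals $\mathcal{Z}_m^{(i)}$. Consequently, if such an automorphism $r_i$ is given for every $i \in I$, then $\bigcap_{i \in I}\{f \in \mathcal{Y}_m : r_i(f) = f\} = \bigcap_{i \in I} \mathcal{Z}_m^{(i)}$. -/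

import Mathlib

set_option linter.unusedSectionVars false
set_option linter.unusedVariables false
set_option maxHeartbeats 1000000
set_option synthInstance.maxHeartbeats 1000000


/- Setting: `𝔤` a finite dimensional simple Lie algebra of simply-laced type with Cartan matrix
`A` indexed by `I = Fin ℓ` (encoded by: symmetric, diagonal entries `2`, off-diagonal entries in
`{0, -1}`, and positive definite — these conditions characterize the Cartan matrices of types
`A_ℓ`, `D_ℓ`, `E_ℓ`).  `Ly ℓ m` is the field of fractions of the (Laurent) polynomial ring over
`ℂ` in commuting variables `yv j n`, `j ∈ I`, `n ∈ ℤ/mℤ`. -/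

noncomputable section

variable (ℓ : ℕ) (m : ℕ) [NeZero m]

/-- The ambient field `𝒴_m`. -/
abbrev Ly := FractionRing (MvPolynomial (Fin ℓ × ZMod m) ℂ)

/-- The variable `y_j(n)`. -/
def yv (j : Fin ℓ) (n : ZMod m) : Ly ℓ m :=
  algebraMap (MvPolynomial (Fin ℓ × ZMod m) ℂ) (Ly ℓ m) (MvPolynomial.X (j, n))

variable (A : Matrix (Fin ℓ) (Fin ℓ) ℤ)

/-- `F_i(n) = ∏_{j<i, A i j ≠ 0} y_j(n+1) ∏_{j>i, A i j ≠ 0} y_j(n)`. -/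
def Fv (i : Fin ℓ) (n : ZMod m) : Ly ℓ m :=
  (∏ j ∈ Finset.univ.filter fun j => j < i ∧ A i j ≠ 0, yv ℓ m j (n + 1)) *
    ∏ j ∈ Finset.univ.filter fun j => i < j ∧ A i j ≠ 0, yv ℓ m j n

/-- `X_i(n) = F_i(n)/(y_i(n) y_i(n+1))`. -/
def Xv (i : Fin ℓ) (n : ZMod m) : Ly ℓ m :=
  Fv ℓ m A i n / (yv ℓ m i n * yv ℓ m i (n + 1))

/-- `P_i(n) = 1 + ∑_{k=0}^{m-2} X_i(n) X_i(n-1) ⋯ X_i(n-k)`. -/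
def Pv (i : Fin ℓ) (n : ZMod m) : Ly ℓ m :=
  1 + ∑ k ∈ Finset.range (m - 1), ∏ j ∈ Finset.range (k + 1), Xv ℓ m A i (n - (j : ZMod m))

/-- `z_i(n) = y_i(n)(1 + X_i(n))`. -/
def zv (i : Fin ℓ) (n : ZMod m) : Ly ℓ m := yv ℓ m i n * (1 + Xv ℓ m A i n)

/-- `𝒵_m^{(i)}`: the subfield of `𝒴_m` generated by `ℂ`, the `z_i(n)`, and the `y_j(n)`
for `j ≠ i`. -/
def Zfield (i : Fin ℓ) : IntermediateField ℂ (Ly ℓ m) :=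
  IntermediateField.adjoin ℂ
    (Set.range (zv ℓ m A i) ∪ {x | ∃ j n, j ≠ i ∧ x = yv ℓ m j n})



/-! ### Auxiliary lemmas -/

namespace Stmt0Aux
abbrev Rp (ℓ m : ℕ) := MvPolynomial (Fin ℓ × ZMod m) ℂ

def E (ℓ m : ℕ) [NeZero m] : Rp ℓ m →+* ℂ := MvPolynomial.eval (fun _ => (1:ℂ))

def Fp (i : Fin ℓ) (n : ZMod m) : Rp ℓ m :=
  (∏ j ∈ Finset.univ.filter fun j => j < i ∧ A i j ≠ 0, MvPolynomial.X (j, n + 1)) *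
    ∏ j ∈ Finset.univ.filter fun j => i < j ∧ A i j ≠ 0, MvPolynomial.X (j, n)

def Dp (ℓ m : ℕ) [NeZero m] (i : Fin ℓ) (n : ZMod m) : Rp ℓ m :=
  MvPolynomial.X (i, n) * MvPolynomial.X (i, n + 1)

lemma E_Fp (i : Fin ℓ) (n : ZMod m) : E ℓ m (Fp ℓ m A i n) = 1 := by
  simp [E, Fp]

lemma E_Dp (i : Fin ℓ) (n : ZMod m) : E ℓ m (Dp ℓ m i n) = 1 := by
  simp [E, Dp]

lemma algMap_inj : Function.Injective (algebraMap (Rp ℓ m) (Ly ℓ m)) :=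
  IsFractionRing.injective _ _

lemma yv_ne_zero (j : Fin ℓ) (n : ZMod m) : yv ℓ m j n ≠ 0 := by
  rw [yv, map_ne_zero_iff _ (algMap_inj ℓ m)]
  exact MvPolynomial.X_ne_zero _

lemma Fv_eq (i : Fin ℓ) (n : ZMod m) :
    Fv ℓ m A i n = algebraMap (Rp ℓ m) (Ly ℓ m) (Fp ℓ m A i n) := by
  rw [Fv, Fp, map_mul, map_prod, map_prod]; rfl

lemma Fv_ne_zero (i : Fin ℓ) (n : ZMod m) : Fv ℓ m A i n ≠ 0 :=
  mul_ne_zero (Finset.prod_ne_zero_iff.2 fun j _ => yv_ne_zero ℓ m j _)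
    (Finset.prod_ne_zero_iff.2 fun j _ => yv_ne_zero ℓ m j _)

lemma Xv_eq (i : Fin ℓ) (n : ZMod m) :
    Xv ℓ m A i n = algebraMap (Rp ℓ m) (Ly ℓ m) (Fp ℓ m A i n) /
      algebraMap (Rp ℓ m) (Ly ℓ m) (Dp ℓ m i n) := by
  rw [Xv, Fv_eq, Dp, map_mul]; rfl

lemma Xv_ne_zero (i : Fin ℓ) (n : ZMod m) : Xv ℓ m A i n ≠ 0 :=
  div_ne_zero (Fv_ne_zero ℓ m A i n) (mul_ne_zero (yv_ne_zero ℓ m i n) (yv_ne_zero ℓ m i _))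

lemma Dp_image_ne_zero (i : Fin ℓ) (n : ZMod m) :
    algebraMap (Rp ℓ m) (Ly ℓ m) (Dp ℓ m i n) ≠ 0 := by
  rw [Dp, map_mul]
  exact mul_ne_zero (yv_ne_zero ℓ m i n) (yv_ne_zero ℓ m i _)

lemma prodX_eq (i : Fin ℓ) (g : ℕ → ZMod m) (s : Finset ℕ) :
    ∏ j ∈ s, Xv ℓ m A i (g j) =
      algebraMap (Rp ℓ m) (Ly ℓ m) (∏ j ∈ s, Fp ℓ m A i (g j)) /
        algebraMap (Rp ℓ m) (Ly ℓ m) (∏ j ∈ s, Dp ℓ m i (g j)) := by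
  rw [map_prod, map_prod, ← Finset.prod_div_distrib]
  exact Finset.prod_congr rfl fun j _ => Xv_eq ℓ m A i (g j)

lemma prodDp_image_ne_zero (i : Fin ℓ) (g : ℕ → ZMod m) (s : Finset ℕ) :
    algebraMap (Rp ℓ m) (Ly ℓ m) (∏ j ∈ s, Dp ℓ m i (g j)) ≠ 0 := by
  rw [map_prod]
  exact Finset.prod_ne_zero_iff.2 fun j _ => Dp_image_ne_zero ℓ m i (g j)

lemma Pv_ne_zero (i : Fin ℓ) (n : ZMod m) : Pv ℓ m A i n ≠ 0 := by
  intro h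
  have hPB : Pv ℓ m A i n *
      algebraMap (Rp ℓ m) (Ly ℓ m)
        (∏ k ∈ Finset.range (m-1), ∏ j ∈ Finset.range (k+1), Dp ℓ m i (n - (j : ZMod m))) =
      algebraMap (Rp ℓ m) (Ly ℓ m)
        ((∏ k ∈ Finset.range (m-1), ∏ j ∈ Finset.range (k+1), Dp ℓ m i (n - (j : ZMod m))) +
        ∑ k ∈ Finset.range (m-1),
          (∏ j ∈ Finset.range (k+1), Fp ℓ m A i (n - (j : ZMod m))) *
          ∏ l ∈ (Finset.range (m-1)).erase k,
            ∏ j ∈ Finset.range (l+1), Dp ℓ m i (n - (j : ZMod m))) := by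
    rw [Pv, add_mul, one_mul, Finset.sum_mul, map_add, map_sum]
    congr 1
    refine Finset.sum_congr rfl fun k hk => ?_
    rw [prodX_eq ℓ m A i (fun j => n - (j : ZMod m)) (Finset.range (k+1)), map_mul,
      ← Finset.mul_prod_erase _ _ hk, map_mul, ← mul_assoc,
      div_mul_cancel₀ _ (prodDp_image_ne_zero ℓ m i _ _)]
  rw [h, zero_mul] at hPB
  have hpoly := algMap_inj ℓ m (hPB.symm.trans (map_zero _).symm)
  have hE := congrArg (E ℓ m) hpoly
  rw [map_zero, map_add, map_sum, map_prod] at hE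
  simp only [map_prod, map_mul, E_Dp, E_Fp, Finset.prod_const_one, one_mul, mul_one] at hE
  rw [Finset.sum_const, Finset.card_range, nsmul_eq_mul, mul_one] at hE
  have h1 : 1 ≤ m := Nat.one_le_iff_ne_zero.2 (NeZero.ne m)
  have hmne : (m:ℂ) ≠ 0 := Nat.cast_ne_zero.2 (NeZero.ne m)
  apply hmne
  calc (m:ℂ) = 1 + ((m-1:ℕ) : ℂ) := by rw [Nat.cast_sub h1]; push_cast; ring
  _ = 0 := hE

lemma prod_range_zmod {M : Type*} [CommMonoid M] (g : ZMod m → M) :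
    ∏ k ∈ Finset.range m, g (k : ZMod m) = ∏ c : ZMod m, g c := by
  refine Finset.prod_nbij' (fun k => (k : ZMod m)) (fun c => c.val) (fun a _ => Finset.mem_univ _)
    (fun c _ => Finset.mem_range.2 (ZMod.val_lt c)) ?_ ?_ (fun a _ => rfl)
  · intro a ha
    exact ZMod.val_cast_of_lt (Finset.mem_range.1 ha)
  · intro c _
    exact ZMod.natCast_rightInverse c

lemma prod_shift_zmod {M : Type*} [CommMonoid M] (g : ZMod m → M) (n : ZMod m) :
    ∏ c : ZMod m, g (n - c) = ∏ c : ZMod m, g c :=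
  Equiv.prod_comp (Equiv.subLeft n) g

/-- `Q = ∏_{n} X_i(n)`. -/
def Qf (i : Fin ℓ) : Ly ℓ m := ∏ c : ZMod m, Xv ℓ m A i c

lemma Qf_ne_zero (i : Fin ℓ) : Qf ℓ m A i ≠ 0 :=
  Finset.prod_ne_zero_iff.2 fun c _ => Xv_ne_zero ℓ m A i c

lemma prod_range_m_Xv (i : Fin ℓ) (n : ZMod m) :
    ∏ j ∈ Finset.range m, Xv ℓ m A i (n - (j : ZMod m)) = Qf ℓ m A i := by
  rw [prod_range_zmod m (fun c => Xv ℓ m A i (n - c)), prod_shift_zmod, Qf]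

/-- Evaluation killing the `i`-th variables. -/
def Ei (ℓ m : ℕ) [NeZero m] (i : Fin ℓ) : Rp ℓ m →+* ℂ :=
  MvPolynomial.eval (fun s => if s.1 = i then 0 else 1)

lemma Ei_Fp (i : Fin ℓ) (n : ZMod m) : Ei ℓ m i (Fp ℓ m A i n) = 1 := by
  rw [Ei, Fp, map_mul, map_prod, map_prod]
  rw [Finset.prod_eq_one, Finset.prod_eq_one, one_mul]
  · intro j hj
    rw [MvPolynomial.eval_X, if_neg]
    exact ne_of_gt (Finset.mem_filter.1 hj).2.1
  · intro j hj
    rw [MvPolynomial.eval_X, if_neg]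
    exact ne_of_lt (Finset.mem_filter.1 hj).2.1

lemma Qf_ne_one (i : Fin ℓ) : Qf ℓ m A i ≠ 1 := by
  intro h
  have hQ : Qf ℓ m A i = algebraMap (Rp ℓ m) (Ly ℓ m) (∏ c : ZMod m, Fp ℓ m A i c) /
      algebraMap (Rp ℓ m) (Ly ℓ m) (∏ c : ZMod m, Dp ℓ m i c) := by
    rw [Qf, map_prod, map_prod, ← Finset.prod_div_distrib]
    exact Finset.prod_congr rfl fun c _ => Xv_eq ℓ m A i c
  have hden : algebraMap (Rp ℓ m) (Ly ℓ m) (∏ c : ZMod m, Dp ℓ m i c) ≠ 0 := by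
    rw [map_prod]
    exact Finset.prod_ne_zero_iff.2 fun c _ => Dp_image_ne_zero ℓ m i c
  rw [hQ, div_eq_one_iff_eq hden] at h
  have hpoly := algMap_inj ℓ m h
  have hE := congrArg (Ei ℓ m i) hpoly
  rw [map_prod, map_prod] at hE
  rw [Finset.prod_eq_one (fun c _ => Ei_Fp ℓ m A i c)] at hE
  rw [Finset.prod_eq_zero (Finset.mem_univ (0 : ZMod m))] at hE
  · exact one_ne_zero hE
  · simp [Dp, Ei]

/-- The key identity `X_i(n) P_i(n-1) = P_i(n) - 1 + Q`. -/
lemma keyI1 (i : Fin ℓ) (n : ZMod m) :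
    Xv ℓ m A i n * Pv ℓ m A i (n - 1) = Pv ℓ m A i n - 1 + Qf ℓ m A i := by
  have hm1 : m - 1 + 1 = m := Nat.succ_pred_eq_of_pos (Nat.pos_of_ne_zero (NeZero.ne m))
  have hg : ∀ k : ℕ, Xv ℓ m A i n * ∏ j ∈ Finset.range (k+1), Xv ℓ m A i (n - 1 - (j : ZMod m)) =
      ∏ j ∈ Finset.range (k+1+1), Xv ℓ m A i (n - (j : ZMod m)) := by
    intro k
    rw [Finset.prod_range_succ' (fun j => Xv ℓ m A i (n - (j : ZMod m))) (k+1)]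
    rw [mul_comm]
    congr 1
    · refine Finset.prod_congr rfl fun j _ => ?_
      congr 1
      push_cast
      ring
    · congr 1
      push_cast
      ring
  rw [Pv, mul_add, mul_one, Finset.mul_sum]
  have hsum : ∀ k ∈ Finset.range (m-1),
      Xv ℓ m A i n * ∏ j ∈ Finset.range (k+1), Xv ℓ m A i (n - 1 - (j : ZMod m)) =
      ∏ j ∈ Finset.range (k+1+1), Xv ℓ m A i (n - (j : ZMod m)) := fun k _ => hg k
  rw [Finset.sum_congr rfl hsum]
  have hx0 : Xv ℓ m A i n = ∏ j ∈ Finset.range (0+1), Xv ℓ m A i (n - (j : ZMod m)) := by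
    rw [Finset.prod_range_one]
    norm_num
  have hr : Finset.range m = Finset.range (m-1+1) := by rw [hm1]
  have hstep : Xv ℓ m A i n + ∑ k ∈ Finset.range (m-1),
        ∏ j ∈ Finset.range (k+1+1), Xv ℓ m A i (n - (j : ZMod m)) =
      ∑ k ∈ Finset.range m, ∏ j ∈ Finset.range (k+1), Xv ℓ m A i (n - (j : ZMod m)) := by
    rw [hr, Finset.sum_range_succ' (fun k => ∏ j ∈ Finset.range (k+1), Xv ℓ m A i (n - (j : ZMod m))) (m-1)]
    rw [← hx0, add_comm]
  rw [hstep, hr, Finset.sum_range_succ, ← hr, prod_range_m_Xv]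
  rw [Pv]
  ring

lemma prod_shift_zmod' {M : Type*} [CommMonoid M] (g : ZMod m → M) (a : ZMod m) :
    ∏ c : ZMod m, g (c - a) = ∏ c : ZMod m, g c :=
  Equiv.prod_comp (Equiv.subRight a) g

/-- `∏_n y_i(n)`. -/
def Py (i : Fin ℓ) : Ly ℓ m := ∏ c : ZMod m, yv ℓ m i c

lemma Py_ne_zero (i : Fin ℓ) : Py ℓ m i ≠ 0 :=
  Finset.prod_ne_zero_iff.2 fun c _ => yv_ne_zero ℓ m i c

section Sigma

variable (σ : Ly ℓ m ≃ₐ[ℂ] Ly ℓ m) (i : Fin ℓ)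

lemma sF (hσ' : ∀ j n, j ≠ i → σ (yv ℓ m j n) = yv ℓ m j n) (n : ZMod m) :
    σ (Fv ℓ m A i n) = Fv ℓ m A i n := by
  rw [Fv, map_mul, map_prod, map_prod]
  congr 1
  · exact Finset.prod_congr rfl fun j hj =>
      hσ' j _ (ne_of_lt (Finset.mem_filter.1 hj).2.1)
  · exact Finset.prod_congr rfl fun j hj =>
      hσ' j _ (ne_of_gt (Finset.mem_filter.1 hj).2.1)

variable (hσ : ∀ n, σ (yv ℓ m i n) =
      Pv ℓ m A i (n - 2) / Pv ℓ m A i (n - 1) * (yv ℓ m i n * Xv ℓ m A i (n - 1)))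
  (hσ' : ∀ j n, j ≠ i → σ (yv ℓ m j n) = yv ℓ m j n)

include hσ hσ'

lemma sX (n : ZMod m) :
    σ (Xv ℓ m A i n) = Pv ℓ m A i n / (Pv ℓ m A i (n - 2) * Xv ℓ m A i (n - 1)) := by
  have e1 : n + 1 - 2 = n - 1 := by ring
  have e2 : n + 1 - 1 = n := by ring
  rw [Xv, map_div₀, map_mul, sF ℓ m A σ i hσ', hσ n, hσ (n + 1), e1, e2]
  have hXn : Xv ℓ m A i n = Fv ℓ m A i n / (yv ℓ m i n * yv ℓ m i (n + 1)) := rfl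
  have hy := yv_ne_zero ℓ m i n
  have hy' := yv_ne_zero ℓ m i (n + 1)
  have hF := Fv_ne_zero ℓ m A i n
  have hP0 := Pv_ne_zero ℓ m A i n
  have hP1 := Pv_ne_zero ℓ m A i (n - 1)
  have hP2 := Pv_ne_zero ℓ m A i (n - 2)
  have hX1 := Xv_ne_zero ℓ m A i (n - 1)
  rw [hXn]
  field_simp

lemma sz (n : ZMod m) : σ (zv ℓ m A i n) = zv ℓ m A i n := by
  have h1 : Xv ℓ m A i (n - 1) * Pv ℓ m A i (n - 2) =
      Pv ℓ m A i (n - 1) - 1 + Qf ℓ m A i := by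
    have := keyI1 ℓ m A i (n - 1)
    rwa [show n - 1 - 1 = n - 2 by ring] at this
  have h2 := keyI1 ℓ m A i n
  have key : Pv ℓ m A i (n - 2) * Xv ℓ m A i (n - 1) + Pv ℓ m A i n =
      Pv ℓ m A i (n - 1) * (1 + Xv ℓ m A i n) := by linear_combination h1 - h2
  rw [zv, map_mul, map_add, map_one, hσ n, sX ℓ m A σ i hσ hσ' n]
  have expand : Pv ℓ m A i (n - 2) / Pv ℓ m A i (n - 1) * (yv ℓ m i n * Xv ℓ m A i (n - 1)) *
      (1 + Pv ℓ m A i n / (Pv ℓ m A i (n - 2) * Xv ℓ m A i (n - 1))) =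
      yv ℓ m i n * ((Pv ℓ m A i (n - 2) * Xv ℓ m A i (n - 1) + Pv ℓ m A i n) /
        Pv ℓ m A i (n - 1)) := by
    have hP1 := Pv_ne_zero ℓ m A i (n - 1)
    have hP2 := Pv_ne_zero ℓ m A i (n - 2)
    have hX1 := Xv_ne_zero ℓ m A i (n - 1)
    field_simp
  rw [expand, key, mul_comm (Pv ℓ m A i (n - 1)) (1 + Xv ℓ m A i n), mul_div_assoc,
    div_self (Pv_ne_zero ℓ m A i (n - 1)), mul_one]

lemma sy_ne (n : ZMod m) : σ (yv ℓ m i n) ≠ yv ℓ m i n := by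
  rw [hσ n]
  intro h
  apply Qf_ne_one ℓ m A i
  have h1 : Xv ℓ m A i (n - 1) * Pv ℓ m A i (n - 2) =
      Pv ℓ m A i (n - 1) - 1 + Qf ℓ m A i := by
    have := keyI1 ℓ m A i (n - 1)
    rwa [show n - 1 - 1 = n - 2 by ring] at this
  have hy := yv_ne_zero ℓ m i n
  have hP1 := Pv_ne_zero ℓ m A i (n - 1)
  have hP2 := Pv_ne_zero ℓ m A i (n - 2)
  have h' : Pv ℓ m A i (n - 2) * Xv ℓ m A i (n - 1) = Pv ℓ m A i (n - 1) := by
    field_simp at h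
    apply mul_left_cancel₀ hy
    linear_combination yv ℓ m i n * h
  linear_combination h' - h1

lemma sQf : σ (Qf ℓ m A i) = 1 / Qf ℓ m A i := by
  rw [Qf, map_prod]
  rw [Finset.prod_congr rfl fun c _ => sX ℓ m A σ i hσ hσ' c]
  rw [Finset.prod_div_distrib, Finset.prod_mul_distrib]
  rw [prod_shift_zmod' m (Pv ℓ m A i) 2, prod_shift_zmod' m (Xv ℓ m A i) 1]
  rw [div_mul_eq_div_div, div_self (Finset.prod_ne_zero_iff.2 fun c _ => Pv_ne_zero ℓ m A i c)]

lemma sPy : σ (Py ℓ m i) = Qf ℓ m A i * Py ℓ m i := by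
  rw [Py, map_prod]
  rw [Finset.prod_congr rfl fun c _ => hσ c]
  rw [Finset.prod_mul_distrib, Finset.prod_mul_distrib, Finset.prod_div_distrib]
  rw [prod_shift_zmod' m (Pv ℓ m A i) 2, prod_shift_zmod' m (Pv ℓ m A i) 1,
    prod_shift_zmod' m (Xv ℓ m A i) 1]
  rw [div_self (Finset.prod_ne_zero_iff.2 fun c _ => Pv_ne_zero ℓ m A i c), one_mul]
  rw [mul_comm]
  rfl

end Sigma
end Stmt0Aux


namespace Stmt0Aux

/-- The fixed subfield of an automorphism. -/
def fixedF (σ : Ly ℓ m ≃ₐ[ℂ] Ly ℓ m) : Subfield (Ly ℓ m) where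
  carrier := {f | σ f = f}
  one_mem' := map_one σ
  mul_mem' := fun {a b} ha hb => by
    simp only [Set.mem_setOf_eq, map_mul] at *; rw [ha, hb]
  zero_mem' := map_zero σ
  add_mem' := fun {a b} ha hb => by
    simp only [Set.mem_setOf_eq, map_add] at *; rw [ha, hb]
  neg_mem' := fun {a} ha => by
    simp only [Set.mem_setOf_eq, map_neg] at *; rw [ha]
  inv_mem' := fun a ha => by
    simp only [Set.mem_setOf_eq, map_inv₀] at *; rw [ha]

/-- The fixed intermediate field of an automorphism. -/
def fixedIF (σ : Ly ℓ m ≃ₐ[ℂ] Ly ℓ m) : IntermediateField ℂ (Ly ℓ m) :=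
  (fixedF ℓ m σ).toIntermediateField fun c => σ.commutes c

section Sigma2

variable (σ : Ly ℓ m ≃ₐ[ℂ] Ly ℓ m) (i : Fin ℓ)
  (hσ : ∀ n, σ (yv ℓ m i n) =
      Pv ℓ m A i (n - 2) / Pv ℓ m A i (n - 1) * (yv ℓ m i n * Xv ℓ m A i (n - 1)))
  (hσ' : ∀ j n, j ≠ i → σ (yv ℓ m j n) = yv ℓ m j n)

include hσ hσ' in
/-- Forward inclusion: `σ` fixes `𝒵` pointwise. -/
lemma fix_of_mem_Z : ∀ x ∈ Zfield ℓ m A i, σ x = x := by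
  have hle : Zfield ℓ m A i ≤ fixedIF ℓ m σ := by
    rw [Zfield, IntermediateField.adjoin_le_iff]
    rintro x (⟨n, rfl⟩ | ⟨j, n, hj, rfl⟩)
    · exact sz ℓ m A σ i hσ hσ' n
    · exact hσ' j n hj
  exact fun x hx => hle hx

end Sigma2

lemma zv_sub_yv (i : Fin ℓ) (n : ZMod m) :
    zv ℓ m A i n - yv ℓ m i n = yv ℓ m i n * Xv ℓ m A i n := by
  rw [zv]; ring

lemma zv_sub_yv_ne_zero (i : Fin ℓ) (n : ZMod m) : zv ℓ m A i n - yv ℓ m i n ≠ 0 := by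
  rw [zv_sub_yv]
  exact mul_ne_zero (yv_ne_zero ℓ m i n) (Xv_ne_zero ℓ m A i n)

/-- `(p_k, q_k)`: numerator/denominator recursion. -/
def seqP (i : Fin ℓ) : ℕ → Ly ℓ m × Ly ℓ m
  | 0 => (yv ℓ m i 0, 1)
  | (k+1) => (Fv ℓ m A i (k : ZMod m) * (seqP i k).2,
      zv ℓ m A i (k : ZMod m) * (seqP i k).2 - (seqP i k).1)

/-- `((a_k, b_k), (c_k, d_k))`: matrix-entry recursion. -/
def seqC (i : Fin ℓ) : ℕ → (Ly ℓ m × Ly ℓ m) × (Ly ℓ m × Ly ℓ m)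
  | 0 => ((1, 0), (0, 1))
  | (k+1) => ((Fv ℓ m A i (k : ZMod m) * (seqC i k).2.1,
      Fv ℓ m A i (k : ZMod m) * (seqC i k).2.2),
      (zv ℓ m A i (k : ZMod m) * (seqC i k).2.1 - (seqC i k).1.1,
       zv ℓ m A i (k : ZMod m) * (seqC i k).2.2 - (seqC i k).1.2))

lemma zv_mem (i : Fin ℓ) (n : ZMod m) : zv ℓ m A i n ∈ Zfield ℓ m A i :=
  IntermediateField.subset_adjoin _ _ (Or.inl ⟨n, rfl⟩)

lemma yvj_mem (i j : Fin ℓ) (n : ZMod m) (hj : j ≠ i) : yv ℓ m j n ∈ Zfield ℓ m A i :=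
  IntermediateField.subset_adjoin _ _ (Or.inr ⟨j, n, hj, rfl⟩)

lemma Fv_mem (i : Fin ℓ) (n : ZMod m) : Fv ℓ m A i n ∈ Zfield ℓ m A i := by
  rw [Fv]
  refine mul_mem (prod_mem fun j hj => ?_) (prod_mem fun j hj => ?_)
  · exact yvj_mem ℓ m A i j _ (ne_of_lt (Finset.mem_filter.1 hj).2.1)
  · exact yvj_mem ℓ m A i j _ (ne_of_gt (Finset.mem_filter.1 hj).2.1)

lemma seqC_mem (i : Fin ℓ) (k : ℕ) :
    (seqC ℓ m A i k).1.1 ∈ Zfield ℓ m A i ∧ (seqC ℓ m A i k).1.2 ∈ Zfield ℓ m A i ∧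
    (seqC ℓ m A i k).2.1 ∈ Zfield ℓ m A i ∧ (seqC ℓ m A i k).2.2 ∈ Zfield ℓ m A i := by
  induction k with
  | zero => exact ⟨one_mem _, zero_mem _, zero_mem _, one_mem _⟩
  | succ k ih =>
    exact ⟨mul_mem (Fv_mem ℓ m A i _) ih.2.2.1, mul_mem (Fv_mem ℓ m A i _) ih.2.2.2,
      sub_mem (mul_mem (zv_mem ℓ m A i _) ih.2.2.1) ih.1,
      sub_mem (mul_mem (zv_mem ℓ m A i _) ih.2.2.2) ih.2.1⟩

lemma yXy (i : Fin ℓ) (n : ZMod m) :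
    yv ℓ m i n * Xv ℓ m A i n * yv ℓ m i (n + 1) = Fv ℓ m A i n := by
  rw [Xv]
  have h1 := yv_ne_zero ℓ m i n
  have h2 := yv_ne_zero ℓ m i (n + 1)
  field_simp

lemma seqP_eq (i : Fin ℓ) (k : ℕ) :
    (seqP ℓ m A i k).2 ≠ 0 ∧
    (seqP ℓ m A i k).1 = yv ℓ m i (k : ZMod m) * (seqP ℓ m A i k).2 := by
  induction k with
  | zero =>
    refine ⟨one_ne_zero, ?_⟩
    simp [seqP]
  | succ k ih =>
    have hzy : zv ℓ m A i (k : ZMod m) - yv ℓ m i (k : ZMod m) ≠ 0 :=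
      zv_sub_yv_ne_zero ℓ m A i _
    have hq : (seqP ℓ m A i (k+1)).2 =
        (zv ℓ m A i (k : ZMod m) - yv ℓ m i (k : ZMod m)) * (seqP ℓ m A i k).2 := by
      rw [seqP, ih.2]; ring
    constructor
    · rw [hq]; exact mul_ne_zero hzy ih.1
    · rw [hq]
      show Fv ℓ m A i (k : ZMod m) * (seqP ℓ m A i k).2 = _
      have hc : ((k+1 : ℕ) : ZMod m) = (k : ZMod m) + 1 := by push_cast; ring
      rw [hc, ← yXy ℓ m A i (k : ZMod m), zv_sub_yv]
      ring

lemma seqP_lin (i : Fin ℓ) (k : ℕ) :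
    (seqP ℓ m A i k).1 = (seqC ℓ m A i k).1.1 * yv ℓ m i 0 + (seqC ℓ m A i k).1.2 ∧
    (seqP ℓ m A i k).2 = (seqC ℓ m A i k).2.1 * yv ℓ m i 0 + (seqC ℓ m A i k).2.2 := by
  induction k with
  | zero => constructor <;> simp [seqP, seqC]
  | succ k ih =>
    constructor
    · show Fv ℓ m A i (k : ZMod m) * (seqP ℓ m A i k).2 =
        Fv ℓ m A i (k : ZMod m) * (seqC ℓ m A i k).2.1 * yv ℓ m i 0 +
        Fv ℓ m A i (k : ZMod m) * (seqC ℓ m A i k).2.2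
      rw [ih.2]; ring
    · show zv ℓ m A i (k : ZMod m) * (seqP ℓ m A i k).2 - (seqP ℓ m A i k).1 =
        (zv ℓ m A i (k : ZMod m) * (seqC ℓ m A i k).2.1 - (seqC ℓ m A i k).1.1) *
          yv ℓ m i 0 +
        (zv ℓ m A i (k : ZMod m) * (seqC ℓ m A i k).2.2 - (seqC ℓ m A i k).1.2)
      rw [ih.1, ih.2]; ring

lemma seqP_snd_prod (i : Fin ℓ) :
    (seqP ℓ m A i m).2 = Py ℓ m i * Qf ℓ m A i := by
  have h : ∀ k : ℕ, (seqP ℓ m A i k).2 =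
      ∏ j ∈ Finset.range k, (yv ℓ m i (j : ZMod m) * Xv ℓ m A i (j : ZMod m)) := by
    intro k
    induction k with
    | zero => simp [seqP]
    | succ k ih =>
      have hq : (seqP ℓ m A i (k+1)).2 =
          (zv ℓ m A i (k : ZMod m) - yv ℓ m i (k : ZMod m)) * (seqP ℓ m A i k).2 := by
        rw [seqP, (seqP_eq ℓ m A i k).2]; ring
      rw [hq, Finset.prod_range_succ, ih, zv_sub_yv]
      ring
  rw [h m, prod_range_zmod m (fun c => yv ℓ m i c * Xv ℓ m A i c), Finset.prod_mul_distrib]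
  rfl

end Stmt0Aux


namespace Stmt0Aux

section Sigma3

variable (σ : Ly ℓ m ≃ₐ[ℂ] Ly ℓ m) (i : Fin ℓ)
  (hσ : ∀ n, σ (yv ℓ m i n) =
      Pv ℓ m A i (n - 2) / Pv ℓ m A i (n - 1) * (yv ℓ m i n * Xv ℓ m A i (n - 1)))
  (hσ' : ∀ j n, j ≠ i → σ (yv ℓ m j n) = yv ℓ m j n)

include hσ hσ' in
lemma mem_Z_of_fix : ∀ f : Ly ℓ m, σ f = f → f ∈ Zfield ℓ m A i := by
  intro f hf
  have hfixK : ∀ x ∈ Zfield ℓ m A i, σ x = x := fix_of_mem_Z ℓ m A σ i hσ hσ'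
  set y : Ly ℓ m := yv ℓ m i 0 with hydef
  have hsmul : ∀ (u : ↥(Zfield ℓ m A i)) (l : Ly ℓ m), u • l = (u : Ly ℓ m) * l :=
    fun u l => rfl
  obtain ⟨haK, hbK, hcK, hdK⟩ := seqC_mem ℓ m A i m
  have hm0 : ((m : ℕ) : ZMod m) = 0 := ZMod.natCast_self m
  -- the fundamental relation
  have hrel : (seqC ℓ m A i m).1.1 * y + (seqC ℓ m A i m).1.2 =
      y * ((seqC ℓ m A i m).2.1 * y + (seqC ℓ m A i m).2.2) := by
    have h1 := (seqP_lin ℓ m A i m).1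
    have h2 := (seqP_lin ℓ m A i m).2
    have h3 := (seqP_eq ℓ m A i m).2
    rw [hm0] at h3
    rw [← h1, ← h2, hydef]
    exact h3
  -- c ≠ 0
  have hcne : (seqC ℓ m A i m).2.1 ≠ 0 := by
    intro hc0
    have hqd : (seqP ℓ m A i m).2 = (seqC ℓ m A i m).2.2 := by
      rw [(seqP_lin ℓ m A i m).2, hc0, zero_mul, zero_add]
    have hPQ : Py ℓ m i * Qf ℓ m A i = (seqC ℓ m A i m).2.2 := by
      rw [← seqP_snd_prod ℓ m A i, hqd]
    have hfix : σ (Py ℓ m i * Qf ℓ m A i) = Py ℓ m i * Qf ℓ m A i := by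
      rw [hPQ]; exact hfixK _ hdK
    rw [map_mul, sPy ℓ m A σ i hσ hσ', sQf ℓ m A σ i hσ hσ'] at hfix
    have hPy := Py_ne_zero ℓ m i
    have hQ0 := Qf_ne_zero ℓ m A i
    apply Qf_ne_one ℓ m A i
    have h2 : Py ℓ m i * 1 = Py ℓ m i * Qf ℓ m A i := by
      rw [mul_one]
      calc Py ℓ m i = Qf ℓ m A i * Py ℓ m i * (1 / Qf ℓ m A i) := by field_simp
      _ = Py ℓ m i * Qf ℓ m A i := hfix
    exact (mul_left_cancel₀ hPy h2).symm
  have quad : (seqC ℓ m A i m).2.1 * (y * y) =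
      ((seqC ℓ m A i m).1.1 - (seqC ℓ m A i m).2.2) * y + (seqC ℓ m A i m).1.2 := by
    linear_combination -hrel
  -- y is integral over K
  have hint : IsIntegral ↥(Zfield ℓ m A i) y := by
    rw [← isAlgebraic_iff_isIntegral]
    refine ⟨Polynomial.C (⟨(seqC ℓ m A i m).2.1, hcK⟩ : ↥(Zfield ℓ m A i)) * Polynomial.X ^ 2 +
      Polynomial.C (⟨(seqC ℓ m A i m).2.2 - (seqC ℓ m A i m).1.1, sub_mem hdK haK⟩ : ↥(Zfield ℓ m A i)) *
        Polynomial.X +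
      Polynomial.C (⟨-(seqC ℓ m A i m).1.2, neg_mem hbK⟩ : ↥(Zfield ℓ m A i)), ?_, ?_⟩
    · intro h0
      have h2 := congrArg (fun p => Polynomial.coeff p 2) h0
      simp only [Polynomial.coeff_add, Polynomial.coeff_C_mul, Polynomial.coeff_X_pow,
        Polynomial.coeff_C, Polynomial.coeff_X, Polynomial.coeff_zero] at h2
      norm_num at h2
      exact hcne (congrArg Subtype.val h2)
    · simp only [map_add, map_mul, map_pow, Polynomial.aeval_C, Polynomial.aeval_X]
      show (seqC ℓ m A i m).2.1 * y ^ 2 +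
        ((seqC ℓ m A i m).2.2 - (seqC ℓ m A i m).1.1) * y + -(seqC ℓ m A i m).1.2 = 0
      linear_combination quad
  -- every element lies in K⟮y⟯
  have hKa_base : ∀ x ∈ Zfield ℓ m A i, x ∈ IntermediateField.adjoin ↥(Zfield ℓ m A i) {y} := fun x hx =>
    IntermediateField.algebraMap_mem _ (⟨x, hx⟩ : ↥(Zfield ℓ m A i))
  have hyv_mem : ∀ k : ℕ, yv ℓ m i (k : ZMod m) ∈ IntermediateField.adjoin ↥(Zfield ℓ m A i) {y} := by
    intro k
    induction k with
    | zero =>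
      have : ((0:ℕ) : ZMod m) = 0 := Nat.cast_zero
      rw [this]
      exact IntermediateField.mem_adjoin_simple_self ↥(Zfield ℓ m A i) y
    | succ k ih =>
      have hrec : yv ℓ m i ((k+1 : ℕ) : ZMod m) =
          Fv ℓ m A i (k : ZMod m) / (zv ℓ m A i (k : ZMod m) - yv ℓ m i (k : ZMod m)) := by
        rw [eq_div_iff (zv_sub_yv_ne_zero ℓ m A i _), zv_sub_yv]
        have hc : ((k+1:ℕ) : ZMod m) = (k : ZMod m) + 1 := by push_cast; ring
        rw [hc, ← yXy ℓ m A i (k : ZMod m)]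
        ring
      rw [hrec]
      exact div_mem (hKa_base _ (Fv_mem ℓ m A i _))
        (sub_mem (hKa_base _ (zv_mem ℓ m A i _)) ih)
  have hyv_mem' : ∀ (j : Fin ℓ) (n : ZMod m), yv ℓ m j n ∈ IntermediateField.adjoin ↥(Zfield ℓ m A i) {y} := by
    intro j n
    by_cases hj : j = i
    · subst hj
      have := hyv_mem n.val
      rwa [ZMod.natCast_rightInverse n] at this
    · exact hKa_base _ (yvj_mem ℓ m A i j n hj)
  have halgmem : ∀ p : Rp ℓ m,
      algebraMap (Rp ℓ m) (Ly ℓ m) p ∈ IntermediateField.adjoin ↥(Zfield ℓ m A i) {y} := by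
    intro p
    induction p using MvPolynomial.induction_on with
    | C c =>
      have hc : algebraMap (Rp ℓ m) (Ly ℓ m) (MvPolynomial.C c) = algebraMap ℂ (Ly ℓ m) c := by
        rw [← MvPolynomial.algebraMap_eq, ← IsScalarTower.algebraMap_apply]
      rw [hc]
      exact hKa_base _ ((Zfield ℓ m A i).algebraMap_mem c)
    | add p q hp hq => rw [map_add]; exact add_mem hp hq
    | mul_X p s hp =>
      rw [map_mul]
      exact mul_mem hp (hyv_mem' s.1 s.2)
  have htop : f ∈ IntermediateField.adjoin ↥(Zfield ℓ m A i) {y} := by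
    obtain ⟨p, q, hq, hpq⟩ := IsFractionRing.div_surjective (A := Rp ℓ m) f
    rw [← hpq]
    exact div_mem (halgmem p) (halgmem q)
  have htop' : f ∈ Algebra.adjoin ↥(Zfield ℓ m A i) ({y} : Set (Ly ℓ m)) := by
    rw [← IntermediateField.adjoin_simple_toSubalgebra_of_isAlgebraic hint.isAlgebraic]
    exact htop
  -- span argument
  set S : Submodule ↥(Zfield ℓ m A i) (Ly ℓ m) := Submodule.span ↥(Zfield ℓ m A i) ({1, y} : Set (Ly ℓ m)) with hS
  have h1S : (1 : Ly ℓ m) ∈ S := Submodule.subset_span (by left; rfl)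
  have hyS : y ∈ S := Submodule.subset_span (by right; rfl)
  have hy2 : y * y ∈ S := by
    have hcK' : ((⟨(seqC ℓ m A i m).2.1, hcK⟩ : ↥(Zfield ℓ m A i)) : Ly ℓ m) ≠ 0 := hcne
    have heq : y * y = (⟨(seqC ℓ m A i m).2.1, hcK⟩ : ↥(Zfield ℓ m A i))⁻¹ •
        ((⟨(seqC ℓ m A i m).1.1 - (seqC ℓ m A i m).2.2, sub_mem haK hdK⟩ : ↥(Zfield ℓ m A i)) • y +
         (⟨(seqC ℓ m A i m).1.2, hbK⟩ : ↥(Zfield ℓ m A i)) • (1 : Ly ℓ m)) := by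
      rw [hsmul, hsmul, hsmul, IntermediateField.coe_inv]
      rw [eq_inv_mul_iff_mul_eq₀ hcK']
      push_cast
      linear_combination quad
    rw [heq]
    exact Submodule.smul_mem _ _ (add_mem (Submodule.smul_mem _ _ hyS)
      (Submodule.smul_mem _ _ h1S))
  have hmulS : ∀ u ∈ S, ∀ v ∈ S, u * v ∈ S := by
    intro u hu v hv
    obtain ⟨e, g, hu'⟩ := Submodule.mem_span_pair.1 hu
    obtain ⟨e', g', hv'⟩ := Submodule.mem_span_pair.1 hv
    have huv : u * v = (e * e') • (1 : Ly ℓ m) + (e * g' + g * e') • y +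
        (g * g') • (y * y) := by
      rw [← hu', ← hv']
      simp only [hsmul]
      push_cast
      ring
    rw [huv]
    exact add_mem (add_mem (Submodule.smul_mem _ _ h1S) (Submodule.smul_mem _ _ hyS))
      (Submodule.smul_mem _ _ hy2)
  have hfS : f ∈ S := by
    refine Algebra.adjoin_induction ?_ ?_ ?_ ?_ htop'
    · rintro x (rfl : x = y); exact hyS
    · intro r
      rw [Algebra.algebraMap_eq_smul_one]
      exact Submodule.smul_mem _ _ h1S
    · intro a b _ _ ha hb; exact add_mem ha hb
    · intro a b _ _ ha hb; exact hmulS _ ha _ hb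
  obtain ⟨u, v, huv⟩ := Submodule.mem_span_pair.1 hfS
  have hvy : (v : Ly ℓ m) * (σ y - y) = 0 := by
    have hσf : σ (u • (1 : Ly ℓ m) + v • y) = u • (1 : Ly ℓ m) + v • y := by
      rw [huv]; exact hf
    simp only [hsmul, map_add, map_mul, map_one] at hσf
    rw [hfixK _ u.2, hfixK _ v.2] at hσf
    linear_combination hσf
  have hv0 : (v : Ly ℓ m) = 0 := by
    rcases mul_eq_zero.1 hvy with h | h
    · exact h
    · exact absurd (sub_eq_zero.1 h) (sy_ne ℓ m A σ i hσ hσ' 0)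
  have hfu : f = (u : Ly ℓ m) := by
    rw [← huv, hsmul, hsmul, hv0, mul_one, zero_mul, add_zero]
  rw [hfu]
  exact u.2

end Sigma3
end Stmt0Aux

/-- for a simply-laced Cartan matrix `A`, if for each `i` a field automorphism `r_i`
of `𝒴_m` fixing `ℂ` pointwise is given with `r_i(y_i(n)) = (P_i(n-2)/P_i(n-1)) y_i(n) X_i(n-1)`
and `r_i(y_j(n)) = y_j(n)` for `j ≠ i`, then the fixed field of `r_i` equals `𝒵_m^{(i)}` for each
`i`; consequently `⋂_i {f : r_i(f) = f} = ⋂_i 𝒵_m^{(i)}`. -/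
theorem stmt_0 (hl : 1 ≤ ℓ) (hm : 2 ≤ m)
    (hdiag : ∀ i, A i i = 2) (hsym : ∀ i j, A i j = A j i)
    (hoff : ∀ i j, i ≠ j → A i j = 0 ∨ A i j = -1)
    (hpos : (A.map (Int.cast : ℤ → ℝ)).PosDef)
    (r : Fin ℓ → (Ly ℓ m ≃ₐ[ℂ] Ly ℓ m))
    (hr : ∀ i n, r i (yv ℓ m i n) =
      Pv ℓ m A i (n - 2) / Pv ℓ m A i (n - 1) * (yv ℓ m i n * Xv ℓ m A i (n - 1)))
    (hr' : ∀ i j n, j ≠ i → r i (yv ℓ m j n) = yv ℓ m j n) :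
    (∀ i, {f : Ly ℓ m | r i f = f} = (Zfield ℓ m A i : Set (Ly ℓ m))) ∧
      (⋂ i, {f : Ly ℓ m | r i f = f}) = ⋂ i, (Zfield ℓ m A i : Set (Ly ℓ m)) := by
  have main : ∀ i, {f : Ly ℓ m | r i f = f} = (Zfield ℓ m A i : Set (Ly ℓ m)) := by
    intro i
    ext f
    simp only [Set.mem_setOf_eq, SetLike.mem_coe]
    exact ⟨fun hf => Stmt0Aux.mem_Z_of_fix ℓ m A (r i) i (hr i)
        (fun j n hj => hr' i j n hj) f hf,
      fun hf => Stmt0Aux.fix_of_mem_Z ℓ m A (r i) i (hr i)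
        (fun j n hj => hr' i j n hj) f hf⟩
  exact ⟨main, Set.iInter_congr main⟩
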